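/- Under Assumptions A7 and A9, if the estimator θ̃ⁿ satisfies limsup_{n→∞} ℙ_{θ₁}(θ̃ⁿ ≠ θ₁) < 1 for every θ₁ ∈ Θ∖{θ₀} (data i.i.d. with law ℙ_{θ₁}), then liminf_{n→∞} (1/n) ln ℙ_{θ₀}(θ̃ⁿ ≠ θ₀) ≥ sup_{θ₁ ∈ Θ∖{θ₀}} E_{θ₁} ln( f_Y(Y; θ₀)/f_Y(Y; θ₁) ). -/

import Mathlib

open MeasureTheory ProbabilityTheory Filter
open scoped ENNReal NNReal Topology

set_option maxHeartbeats 1000000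

/-- The probability measure with density `f θ` with respect to `μ` (Assumption A7). -/
noncomputable def densModel {𝔜 Θ : Type*} [MeasurableSpace 𝔜]
    (μ : Measure 𝔜) (f : Θ → 𝔜 → ℝ) (θ : Θ) : Measure 𝔜 :=
  μ.withDensity fun y => ENNReal.ofReal (f θ y)

/-- The extended-real-valued expectation `E_ρ[g]`, defined as the difference of the
Lebesgue integrals of the positive and negative parts. -/
noncomputable def extExp {𝔜 : Type*} [MeasurableSpace 𝔜]
    (ρ : Measure 𝔜) (g : 𝔜 → ℝ) : EReal :=
  ((∫⁻ y, ENNReal.ofReal (g y) ∂ρ : ℝ≥0∞) : EReal) -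
    ((∫⁻ y, ENNReal.ofReal (-g y) ∂ρ : ℝ≥0∞) : EReal)

section Aux

variable {𝔜 : Type*} [MeasurableSpace 𝔜]

/-- Lintegral of a product of coordinate functions over a finite product measure. -/
lemma lintegral_pi_prod_aux (μ : Measure 𝔜) [SigmaFinite μ] :
    ∀ (n : ℕ) (w : Fin n → 𝔜 → ℝ≥0∞), (∀ i, Measurable (w i)) →
      ∫⁻ y, ∏ i, w i (y i) ∂(Measure.pi fun _ : Fin n => μ) = ∏ i, ∫⁻ x, w i x ∂μ := by
  intro n
  induction n with
  | zero =>
      intro w hw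
      rw [Measure.pi_of_empty (fun _ : Fin 0 => μ)]
      simp
  | succ n ih =>
      intro w hw
      have h := (measurePreserving_piFinSuccAbove (fun _ : Fin (n + 1) => μ) 0).symm
      have hmeas : Measurable fun y : Fin (n + 1) → 𝔜 => ∏ i, w i (y i) :=
        Finset.measurable_prod _ fun i _ => (hw i).comp (measurable_pi_apply i)
      rw [← h.lintegral_comp hmeas]
      have hpt : ∀ z : 𝔜 × (Fin n → 𝔜),
          (∏ i, w i (((MeasurableEquiv.piFinSuccAbove (fun _ : Fin (n + 1) => 𝔜) 0).symm z) i))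
            = w 0 z.1 * ∏ i : Fin n, w i.succ (z.2 i) := by
        intro z
        have hz : ((MeasurableEquiv.piFinSuccAbove (fun _ : Fin (n + 1) => 𝔜) 0).symm z)
            = Fin.cons z.1 z.2 := by
          simp [MeasurableEquiv.piFinSuccAbove_symm_apply, Fin.insertNthEquiv,
            Fin.insertNth_zero]
        rw [hz, Fin.prod_univ_succ]
        simp
      simp_rw [hpt]
      have hstep : ∫⁻ (a : 𝔜 × (Fin n → 𝔜)), w 0 a.1 * ∏ i : Fin n, w i.succ (a.2 i)
            ∂(μ.prod (Measure.pi fun _ : Fin n => μ))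
          = (∫⁻ x, w 0 x ∂μ) *
            ∫⁻ p, ∏ i : Fin n, w i.succ (p i) ∂(Measure.pi fun _ : Fin n => μ) :=
        lintegral_prod_mul ((hw 0).aemeasurable)
          ((Finset.measurable_prod Finset.univ fun (i : Fin n) _ =>
            (hw i.succ).comp (measurable_pi_apply i)).aemeasurable)
      rw [hstep, ih (fun i => w i.succ) (fun i => hw i.succ), Fin.prod_univ_succ]

/-- A finite product of measures with densities is the product measure with the
product density. -/
lemma pi_withDensity_aux (μ : Measure 𝔜) [SigmaFinite μ] {w : 𝔜 → ℝ≥0∞} (hw : Measurable w)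
    [SigmaFinite (μ.withDensity w)] (n : ℕ) :
    Measure.pi (fun _ : Fin n => μ.withDensity w)
      = (Measure.pi fun _ : Fin n => μ).withDensity fun y => ∏ i, w (y i) := by
  refine Measure.pi_eq fun s hs => ?_
  rw [withDensity_apply _ (MeasurableSet.univ_pi hs),
    ← lintegral_indicator (MeasurableSet.univ_pi hs)]
  have hpt : ∀ y : Fin n → 𝔜,
      (Set.univ.pi s).indicator (fun y => ∏ i, w (y i)) y
        = ∏ i, (s i).indicator w (y i) := by
    intro y
    by_cases h : y ∈ Set.univ.pi s
    · rw [Set.indicator_of_mem h]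
      exact Finset.prod_congr rfl fun i _ =>
        (Set.indicator_of_mem (h i (Set.mem_univ i)) w).symm
    · rw [Set.indicator_of_notMem h]
      obtain ⟨i, hi⟩ : ∃ i, y i ∉ s i := by simpa [Set.mem_pi] using h
      exact (Finset.prod_eq_zero (Finset.mem_univ i)
        (by simp [Set.indicator_of_notMem hi])).symm
  rw [lintegral_congr hpt,
    lintegral_pi_prod_aux μ n _ (fun i => hw.indicator (hs i))]
  exact Finset.prod_congr rfl fun i _ => by
    rw [lintegral_indicator (hs i), withDensity_apply _ (hs i)]

/-- Coordinate evaluation is measure preserving on a product of probability measures. -/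
lemma measurePreserving_eval_aux (P : Measure 𝔜) [IsProbabilityMeasure P] {n : ℕ} (i : Fin n) :
    MeasurePreserving (Function.eval i) (Measure.pi fun _ : Fin n => P) P := by
  refine ⟨measurable_pi_apply i, ?_⟩
  ext s hs
  rw [Measure.map_apply (measurable_pi_apply i) hs, Set.eval_preimage, Measure.pi_pi]
  have hpt : ∀ j : Fin n, P (Function.update (fun _ => Set.univ) i s j)
      = if j = i then P s else 1 := by
    intro j
    rcases eq_or_ne j i with rfl | h
    · simp
    · simp [Function.update_of_ne h, h]
  simp_rw [hpt]
  rw [Finset.prod_ite_eq' Finset.univ i (fun _ => P s)]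
  simp

lemma lintegral_eval_aux (P : Measure 𝔜) [IsProbabilityMeasure P] {n : ℕ} (i : Fin n)
    {φ : 𝔜 → ℝ≥0∞} (hφ : Measurable φ) :
    ∫⁻ y, φ (y i) ∂(Measure.pi fun _ : Fin n => P) = ∫⁻ x, φ x ∂P :=
  (measurePreserving_eval_aux P i).lintegral_comp hφ

/-- Bochner integral of a single coordinate function. -/
lemma integral_eval_aux (P : Measure 𝔜) [IsProbabilityMeasure P] {n : ℕ} (i : Fin n)
    (φ : 𝔜 → ℝ) :
    ∫ y, φ (y i) ∂(Measure.pi fun _ : Fin n => P) = ∫ x, φ x ∂P := by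
  letI : MeasureSpace 𝔜 := ⟨P⟩
  haveI : IsProbabilityMeasure (volume : Measure 𝔜) := ‹_›
  have h1 : ∀ y : Fin n → 𝔜, φ (y i)
      = ∏ k, (fun x => if k = i then φ x else 1) (y k) := by
    intro y
    rw [Finset.prod_ite_eq' Finset.univ i (fun k => φ (y k))]
    simp
  have h2 : (Measure.pi fun _ : Fin n => P) = (volume : Measure (Fin n → 𝔜)) := rfl
  rw [h2]
  simp_rw [h1]
  rw [MeasureTheory.integral_fintype_prod_volume_eq_prod (ι := Fin n)
    (fun k x => if k = i then φ x else 1)]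
  have h3 : ∀ k : Fin n, (∫ x, (if k = i then φ x else 1) ∂(volume : Measure 𝔜))
      = if k = i then ∫ x, φ x ∂P else 1 := by
    intro k
    rcases eq_or_ne k i with rfl | h
    · simp only [if_pos rfl]; rfl
    · simp [h]
  simp_rw [h3]
  rw [Finset.prod_ite_eq' Finset.univ i (fun _ => ∫ x, φ x ∂P)]
  simp

/-- Bochner integral of a product of two distinct coordinate functions. -/
lemma integral_eval_mul_eval_aux (P : Measure 𝔜) [IsProbabilityMeasure P] {n : ℕ}
    {i j : Fin n} (hij : i ≠ j) (φ ψ : 𝔜 → ℝ) :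
    ∫ y, φ (y i) * ψ (y j) ∂(Measure.pi fun _ : Fin n => P)
      = (∫ x, φ x ∂P) * ∫ x, ψ x ∂P := by
  letI : MeasureSpace 𝔜 := ⟨P⟩
  haveI : IsProbabilityMeasure (volume : Measure 𝔜) := ‹_›
  have h1 : ∀ y : Fin n → 𝔜, φ (y i) * ψ (y j)
      = ∏ k, (fun x => (if k = i then φ x else 1) * (if k = j then ψ x else 1)) (y k) := by
    intro y
    rw [Finset.prod_mul_distrib,
      Finset.prod_ite_eq' Finset.univ i (fun k => φ (y k)),
      Finset.prod_ite_eq' Finset.univ j (fun k => ψ (y k))]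
    simp
  have h2 : (Measure.pi fun _ : Fin n => P) = (volume : Measure (Fin n → 𝔜)) := rfl
  rw [h2]
  simp_rw [h1]
  rw [MeasureTheory.integral_fintype_prod_volume_eq_prod (ι := Fin n)
    (fun k x => (if k = i then φ x else 1) * (if k = j then ψ x else 1))]
  have h3 : ∀ k : Fin n,
      (∫ x, (if k = i then φ x else 1) * (if k = j then ψ x else 1) ∂(volume : Measure 𝔜))
        = (if k = i then ∫ x, φ x ∂P else 1) * (if k = j then ∫ x, ψ x ∂P else 1) := by
    intro k
    rcases eq_or_ne k i with rfl | hki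
    · simp only [if_pos rfl, if_neg hij, mul_one]
      rfl
    · rcases eq_or_ne k j with rfl | hkj
      · simp only [if_neg hki, if_pos rfl, one_mul]
        rfl
      · simp only [if_neg hki, if_neg hkj, mul_one]
        simp
  simp_rw [h3]
  rw [Finset.prod_mul_distrib,
    Finset.prod_ite_eq' Finset.univ i (fun _ => ∫ x, φ x ∂P),
    Finset.prod_ite_eq' Finset.univ j (fun _ => ∫ x, ψ x ∂P)]
  simp

/-- Bounded measurable functions are integrable w.r.t. a finite measure. -/
lemma integrable_of_bdd_aux {α : Type*} [MeasurableSpace α] {Q : Measure α} [IsFiniteMeasure Q]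
    {φ : α → ℝ} (hφ : Measurable φ) {C : ℝ} (hC : ∀ x, |φ x| ≤ C) :
    Integrable φ Q :=
  Integrable.mono' (integrable_const C) hφ.aestronglyMeasurable
    (Filter.Eventually.of_forall fun x => by simpa using hC x)

/-- Second moment of a centered sum of i.i.d. bounded variables. -/
lemma integral_sq_sum_aux (P : Measure 𝔜) [IsProbabilityMeasure P]
    {h : 𝔜 → ℝ} (hm : Measurable h) {C : ℝ} (hC0 : 0 ≤ C) (hC : ∀ x, |h x| ≤ C)
    (hmean : ∫ x, h x ∂P = 0) (n : ℕ) :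
    ∫ y, (∑ i, h (y i)) ^ 2 ∂(Measure.pi fun _ : Fin n => P)
      = n * ∫ x, h x ^ 2 ∂P := by
  have hCC : ∀ (i j : Fin n) (y : Fin n → 𝔜), |h (y i) * h (y j)| ≤ C * C := by
    intro i j y
    rw [abs_mul]
    exact mul_le_mul (hC _) (hC _) (abs_nonneg _) hC0
  have hintij : ∀ i j : Fin n,
      Integrable (fun y : Fin n → 𝔜 => h (y i) * h (y j))
        (Measure.pi fun _ : Fin n => P) :=
    fun i j => integrable_of_bdd_aux
      (((hm.comp (measurable_pi_apply i))).mul (hm.comp (measurable_pi_apply j)))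
      (fun y => hCC i j y)
  have expand : ∀ y : Fin n → 𝔜,
      (∑ i, h (y i)) ^ 2 = ∑ i, ∑ j, h (y i) * h (y j) := by
    intro y; rw [sq, Finset.sum_mul_sum]
  simp_rw [expand]
  rw [integral_finset_sum _ (fun i _ => integrable_finset_sum _ (fun j _ => hintij i j))]
  have hterm : ∀ i : Fin n, (∫ y, ∑ j, h (y i) * h (y j)
      ∂(Measure.pi fun _ : Fin n => P)) = ∫ x, h x ^ 2 ∂P := by
    intro i
    rw [integral_finset_sum _ (fun j _ => hintij i j)]
    have hij : ∀ j : Fin n, (∫ y, h (y i) * h (y j) ∂(Measure.pi fun _ : Fin n => P))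
        = if i = j then ∫ x, h x ^ 2 ∂P else 0 := by
      intro j
      rcases eq_or_ne i j with rfl | hne
      · rw [if_pos rfl]
        have hpt : ∀ y : Fin n → 𝔜, h (y i) * h (y i) = (fun x => h x ^ 2) (y i) :=
          fun y => (sq (h (y i))).symm
        simp_rw [hpt]
        exact integral_eval_aux P i (fun x => h x ^ 2)
      · rw [if_neg hne, integral_eval_mul_eval_aux P hne h h, hmean, mul_zero]
    simp_rw [hij]
    rw [Finset.sum_ite_eq Finset.univ i (fun _ => ∫ x, h x ^ 2 ∂P)]
    simp
  simp_rw [hterm]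
  rw [Finset.sum_const, Finset.card_univ, Fintype.card_fin, nsmul_eq_mul]

/-- Weak law of large numbers for i.i.d. integrable random variables, in the form
of finite product measures. -/
lemma wlln_aux (P : Measure 𝔜) [IsProbabilityMeasure P]
    {g : 𝔜 → ℝ} (hg : Measurable g) (hgi : Integrable g P) {ε : ℝ} (hε : 0 < ε) :
    Tendsto (fun n : ℕ => (Measure.pi fun _ : Fin n => P)
        {y | (n : ℝ) * ε ≤ |(∑ i, g (y i)) - n * ∫ x, g x ∂P|})
      atTop (𝓝 0) := by
  rw [ENNReal.tendsto_nhds_zero]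
  intro κ hκ
  obtain ⟨r, hr0, hrκ⟩ : ∃ r : ℝ, 0 < r ∧ ENNReal.ofReal r ≤ κ := by
    rcases eq_or_ne κ ⊤ with rfl | hκt
    · exact ⟨1, one_pos, le_top⟩
    · exact ⟨κ.toReal, ENNReal.toReal_pos hκ.ne' hκt,
        le_of_eq (ENNReal.ofReal_toReal hκt)⟩
  -- truncation
  set gM : ℕ → 𝔜 → ℝ := fun M x => max (-(M : ℝ)) (min (g x) M) with hgMdef
  have hgMmeas : ∀ M, Measurable (gM M) := fun M =>
    (measurable_const.max ((hg.min measurable_const)))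
  have hgMbd : ∀ M x, |gM M x| ≤ (M : ℝ) := by
    intro M x
    have hM0 : (0 : ℝ) ≤ M := Nat.cast_nonneg M
    rw [abs_le]
    exact ⟨le_max_left _ _, max_le (by linarith) (le_trans (min_le_right _ _) le_rfl)⟩
  have hdiffbd : ∀ M x, |g x - gM M x| ≤ |g x| := by
    intro M x
    have hM0 : (0 : ℝ) ≤ M := Nat.cast_nonneg M
    rcases le_total (g x) (-(M : ℝ)) with h1 | h1
    · have hmin : min (g x) (M : ℝ) = g x := min_eq_left (by linarith)
      have hmax : gM M x = -(M : ℝ) := by rw [hgMdef]; simp only []; rw [hmin]; exact max_eq_left h1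
      rw [hmax]
      have hgx : g x ≤ 0 := by linarith
      rw [abs_of_nonpos (by linarith : g x - -(M:ℝ) ≤ 0), abs_of_nonpos hgx]
      linarith
    · rcases le_total (g x) (M : ℝ) with h2 | h2
      · have : gM M x = g x := by
          rw [hgMdef]; simp only []; rw [min_eq_left h2]; exact max_eq_right h1
        rw [this]; simp [abs_nonneg]
      · have : gM M x = (M : ℝ) := by
          rw [hgMdef]; simp only []; rw [min_eq_right h2]; exact max_eq_right (by linarith)
        rw [this]
        rw [abs_of_nonneg (by linarith : (0:ℝ) ≤ g x - M), abs_of_nonneg (by linarith)]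
        linarith
  have hdiffint : ∀ M, Integrable (fun x => |g x - gM M x|) P := fun M =>
    Integrable.mono' hgi.abs ((hg.sub (hgMmeas M)).abs).aestronglyMeasurable
      (Filter.Eventually.of_forall fun x => by
        rw [Real.norm_eq_abs, abs_abs]; exact hdiffbd M x)
  have htendsto : Tendsto (fun M : ℕ => ∫ x, |g x - gM M x| ∂P) atTop (𝓝 0) := by
    have h0 : (0 : ℝ) = ∫ x, (0 : ℝ) ∂P := by simp
    rw [h0]
    apply tendsto_integral_of_dominated_convergence (fun x => |g x|)
      (fun M => ((hg.sub (hgMmeas M)).abs).aestronglyMeasurable) hgi.abs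
      (fun M => Filter.Eventually.of_forall fun x => by
        rw [Real.norm_eq_abs, abs_abs]; exact hdiffbd M x)
    refine Filter.Eventually.of_forall fun x => ?_
    have : ∀ᶠ M : ℕ in atTop, |g x - gM M x| = 0 := by
      filter_upwards [eventually_ge_atTop ⌈|g x|⌉₊] with M hM
      have hMx : |g x| ≤ (M : ℝ) := le_trans (Nat.le_ceil _) (Nat.cast_le.mpr hM)
      have h1 : g x ≤ (M : ℝ) := le_trans (le_abs_self _) hMx
      have h2 : -(M : ℝ) ≤ g x := by
        have := neg_abs_le (g x); linarith
      have : gM M x = g x := by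
        rw [hgMdef]; simp only []; rw [min_eq_left h1]; exact max_eq_right h2
      rw [this]; simp
    exact Tendsto.congr' (this.mono fun M hM => hM.symm) tendsto_const_nhds
  -- choose truncation level M
  have hre : 0 < r * ε / 8 := by positivity
  obtain ⟨M, hM⟩ : ∃ M : ℕ, ∫ x, |g x - gM M x| ∂P < r * ε / 8 := by
    rcases (htendsto.eventually (gt_mem_nhds hre)).exists with ⟨M, hM⟩
    exact ⟨M, hM⟩
  set t : 𝔜 → ℝ := fun x => g x - gM M x with htdef
  have htmeas : Measurable t := hg.sub (hgMmeas M)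
  have hgMint : Integrable (gM M) P :=
    integrable_of_bdd_aux (hgMmeas M) (hgMbd M)
  have htint : Integrable t P := hgi.sub hgMint
  set β : ℝ := ∫ x, |t x| ∂P with hβdef
  have hβ0 : 0 ≤ β := integral_nonneg fun x => abs_nonneg _
  have hβlt : β < r * ε / 8 := hM
  set m : ℝ := ∫ x, g x ∂P with hmdef
  set mM : ℝ := ∫ x, gM M x ∂P with hmMdef
  set mt : ℝ := ∫ x, t x ∂P with hmtdef
  have hmsplit : m = mM + mt := by
    rw [hmMdef, hmtdef, ← integral_add hgMint htint]
    exact integral_congr_ae (Filter.Eventually.of_forall fun x => by simp [htdef])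
  have habsint : ∀ φ : 𝔜 → ℝ, |∫ x, φ x ∂P| ≤ ∫ x, |φ x| ∂P := fun φ => by
    simpa [Real.norm_eq_abs] using norm_integral_le_integral_norm (μ := P) φ
  have hmtβ : |mt| ≤ β := by
    rw [hmtdef, hβdef]
    exact habsint t
  -- centered truncated variable
  set hbar : 𝔜 → ℝ := fun x => gM M x - mM with hbardef
  have hbarmeas : Measurable hbar := (hgMmeas M).sub measurable_const
  have hmMbd : |mM| ≤ (M : ℝ) := by
    rw [hmMdef]
    calc |∫ x, gM M x ∂P| ≤ ∫ x, |gM M x| ∂P := habsint (gM M)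
      _ ≤ ∫ x, (M : ℝ) ∂P := integral_mono (hgMint.abs)
          (integrable_const _) (fun x => hgMbd M x)
      _ = (M : ℝ) := by simp
  have hbarbd : ∀ x, |hbar x| ≤ (M : ℝ) + (M : ℝ) := by
    intro x
    calc |hbar x| ≤ |gM M x| + |mM| := abs_sub _ _
      _ ≤ (M : ℝ) + (M : ℝ) := add_le_add (hgMbd M x) hmMbd
  have hbarmean : ∫ x, hbar x ∂P = 0 := by
    rw [hbardef]
    rw [integral_sub hgMint (integrable_const _)]
    simp [hmMdef]
  set V : ℝ := ∫ x, hbar x ^ 2 ∂P with hVdef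
  have hV0 : 0 ≤ V := integral_nonneg fun x => sq_nonneg _
  -- choose N
  obtain ⟨N, hN1, hNbd⟩ : ∃ N : ℕ, 1 ≤ N ∧ 8 * V / (r * ε ^ 2) ≤ N := by
    refine ⟨max 1 ⌈8 * V / (r * ε ^ 2)⌉₊, le_max_left _ _, ?_⟩
    calc 8 * V / (r * ε ^ 2) ≤ (⌈8 * V / (r * ε ^ 2)⌉₊ : ℝ) := Nat.le_ceil _
      _ ≤ ((max 1 ⌈8 * V / (r * ε ^ 2)⌉₊ : ℕ) : ℝ) := Nat.cast_le.mpr (le_max_right _ _)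
  -- the eventual bound
  filter_upwards [eventually_ge_atTop N] with n hn
  have hn1 : 1 ≤ n := le_trans hN1 hn
  have hnpos : (0 : ℝ) < n := by exact_mod_cast hn1
  set Pn := (Measure.pi fun _ : Fin n => P) with hPndef
  haveI : IsProbabilityMeasure Pn := by rw [hPndef]; infer_instance
  set SM : (Fin n → 𝔜) → ℝ := fun y => ∑ i, gM M (y i) with hSMdef
  set T : (Fin n → 𝔜) → ℝ := fun y => ∑ i, t (y i) with hTdef
  set E1 : Set (Fin n → 𝔜) := {y | (n : ℝ) * ε / 2 ≤ |SM y - n * mM|} with hE1def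
  set E2 : Set (Fin n → 𝔜) := {y | (n : ℝ) * ε / 2 ≤ |T y - n * mt|} with hE2def
  have hsplit : ∀ y : Fin n → 𝔜,
      (∑ i, g (y i)) - n * m = (SM y - n * mM) + (T y - n * mt) := by
    intro y
    have : (∑ i, g (y i)) = SM y + T y := by
      rw [hSMdef, hTdef, ← Finset.sum_add_distrib]
      exact Finset.sum_congr rfl fun i _ => by simp [htdef]
    rw [this, hmsplit]; ring
  have hsub : {y : Fin n → 𝔜 | (n : ℝ) * ε ≤ |(∑ i, g (y i)) - n * m|} ⊆ E1 ∪ E2 := by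
    intro y hy
    simp only [Set.mem_setOf_eq] at hy
    rcases le_or_gt ((n : ℝ) * ε / 2) (|SM y - n * mM|) with h | h
    · exact Or.inl h
    · right
      have habs : |(∑ i, g (y i)) - n * m| ≤ |SM y - n * mM| + |T y - n * mt| := by
        rw [hsplit y]; exact abs_add_le _ _
      simp only [hE2def, Set.mem_setOf_eq]
      linarith
  -- Chebyshev bound on E1
  have hSMmeas : Measurable fun y : Fin n → 𝔜 => SM y - n * mM :=
    (Finset.measurable_sum _ fun i _ => (hgMmeas M).comp (measurable_pi_apply i)).sub
      measurable_const
  have hSMbd : ∀ y : Fin n → 𝔜, |SM y - n * mM| ≤ n * (M : ℝ) + n * (M : ℝ) := by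
    intro y
    calc |SM y - n * mM| ≤ |SM y| + |(n : ℝ) * mM| := abs_sub _ _
      _ ≤ n * (M : ℝ) + n * (M : ℝ) := by
          refine add_le_add ?_ ?_
          · calc |SM y| ≤ ∑ i : Fin n, |gM M (y i)| := Finset.abs_sum_le_sum_abs _ _
              _ ≤ ∑ _i : Fin n, (M : ℝ) := Finset.sum_le_sum fun i _ => hgMbd M (y i)
              _ = n * (M : ℝ) := by simp [mul_comm]
          · rw [abs_mul, abs_of_nonneg (le_of_lt hnpos)]
            exact mul_le_mul_of_nonneg_left hmMbd (le_of_lt hnpos)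
    
  have hsqint : Integrable (fun y : Fin n → 𝔜 => (SM y - n * mM) ^ 2) Pn := by
    apply integrable_of_bdd_aux (hSMmeas.pow_const 2)
      (C := ((n : ℝ) * M + n * M) ^ 2)
    intro y
    rw [abs_of_nonneg (sq_nonneg _), ← sq_abs]
    exact pow_le_pow_left₀ (abs_nonneg _) (hSMbd y) 2
  have hsqval : ∫ y, (SM y - n * mM) ^ 2 ∂Pn = n * V := by
    have : ∀ y : Fin n → 𝔜, SM y - n * mM = ∑ i, hbar (y i) := by
      intro y
      rw [hSMdef, hbardef]
      rw [Finset.sum_sub_distrib]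
      simp [mul_comm]
    simp_rw [this]
    exact integral_sq_sum_aux P hbarmeas (by positivity) hbarbd hbarmean n
  have hE1bd : Pn E1 ≤ ENNReal.ofReal (4 * V / (n * ε ^ 2)) := by
    have ha0 : (0 : ℝ) < ((n : ℝ) * ε / 2) ^ 2 := by positivity
    have hmono : E1 ⊆ {y : Fin n → 𝔜 |
        ENNReal.ofReal (((n : ℝ) * ε / 2) ^ 2) ≤ ENNReal.ofReal ((SM y - n * mM) ^ 2)} := by
      intro y hy
      simp only [hE1def, Set.mem_setOf_eq] at hy
      simp only [Set.mem_setOf_eq]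
      apply ENNReal.ofReal_le_ofReal
      rw [← sq_abs (SM y - n * mM)]
      exact pow_le_pow_left₀ (by positivity) hy 2
    have hmarkov := mul_meas_ge_le_lintegral₀ (μ := Pn)
      (f := fun y : Fin n → 𝔜 => ENNReal.ofReal ((SM y - n * mM) ^ 2))
      ((hSMmeas.pow_const 2).ennreal_ofReal.aemeasurable)
      (ENNReal.ofReal (((n : ℝ) * ε / 2) ^ 2))
    have hlin : ∫⁻ y, ENNReal.ofReal ((SM y - n * mM) ^ 2) ∂Pn
        = ENNReal.ofReal (n * V) := by
      rw [← ofReal_integral_eq_lintegral_ofReal hsqint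
        (Filter.Eventually.of_forall fun y => sq_nonneg _), hsqval]
    have hchain : ENNReal.ofReal (((n : ℝ) * ε / 2) ^ 2) * Pn E1
        ≤ ENNReal.ofReal (n * V) := by
      calc ENNReal.ofReal (((n : ℝ) * ε / 2) ^ 2) * Pn E1
          ≤ ENNReal.ofReal (((n : ℝ) * ε / 2) ^ 2) *
            Pn {y | ENNReal.ofReal (((n : ℝ) * ε / 2) ^ 2)
              ≤ ENNReal.ofReal ((SM y - n * mM) ^ 2)} :=
            mul_le_mul_right (measure_mono hmono) _
        _ ≤ ∫⁻ y, ENNReal.ofReal ((SM y - n * mM) ^ 2) ∂Pn := hmarkov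
        _ = ENNReal.ofReal (n * V) := hlin
    have hchain' : Pn E1 * ENNReal.ofReal (((n : ℝ) * ε / 2) ^ 2)
        ≤ ENNReal.ofReal (n * V) := by
      rw [mul_comm]; exact hchain
    have := (ENNReal.le_div_iff_mul_le
      (Or.inl (ENNReal.ofReal_pos.mpr ha0).ne')
      (Or.inl ENNReal.ofReal_ne_top)).mpr hchain'
    calc Pn E1 ≤ ENNReal.ofReal (n * V) / ENNReal.ofReal (((n : ℝ) * ε / 2) ^ 2) := this
      _ = ENNReal.ofReal (n * V / ((n : ℝ) * ε / 2) ^ 2) :=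
          (ENNReal.ofReal_div_of_pos ha0).symm
      _ = ENNReal.ofReal (4 * V / (n * ε ^ 2)) := by
          congr 1
          field_simp
          ring
  -- Markov bound on E2
  have hTmeas : Measurable fun y : Fin n → 𝔜 => T y - n * mt :=
    (Finset.measurable_sum _ fun i _ => htmeas.comp (measurable_pi_apply i)).sub
      measurable_const
  have hE2bd : Pn E2 ≤ ENNReal.ofReal (4 * β / ε) := by
    have hb0 : (0 : ℝ) < (n : ℝ) * ε / 2 := by positivity
    have hmono : E2 ⊆ {y : Fin n → 𝔜 |
        ENNReal.ofReal ((n : ℝ) * ε / 2) ≤ ENNReal.ofReal (|T y - n * mt|)} := by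
      intro y hy
      exact ENNReal.ofReal_le_ofReal hy
    have hmarkov := mul_meas_ge_le_lintegral₀ (μ := Pn)
      (f := fun y : Fin n → 𝔜 => ENNReal.ofReal (|T y - n * mt|))
      (hTmeas.abs.ennreal_ofReal.aemeasurable)
      (ENNReal.ofReal ((n : ℝ) * ε / 2))
    have hlin : ∫⁻ y, ENNReal.ofReal (|T y - n * mt|) ∂Pn
        ≤ ENNReal.ofReal ((n : ℝ) * (2 * β)) := by
      have hpt : ∀ y : Fin n → 𝔜, ENNReal.ofReal (|T y - n * mt|)
          ≤ ∑ i : Fin n, ENNReal.ofReal (|t (y i)| + |mt|) := by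
        intro y
        have h1 : |T y - n * mt| ≤ ∑ i : Fin n, (|t (y i)| + |mt|) := by
          have : T y - n * mt = ∑ i : Fin n, (t (y i) - mt) := by
            rw [hTdef, Finset.sum_sub_distrib]
            simp [mul_comm]
          rw [this]
          calc |∑ i : Fin n, (t (y i) - mt)| ≤ ∑ i : Fin n, |t (y i) - mt| :=
              Finset.abs_sum_le_sum_abs _ _
            _ ≤ ∑ i : Fin n, (|t (y i)| + |mt|) :=
              Finset.sum_le_sum fun i _ => abs_sub _ _
        calc ENNReal.ofReal (|T y - n * mt|)
            ≤ ENNReal.ofReal (∑ i : Fin n, (|t (y i)| + |mt|)) :=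
              ENNReal.ofReal_le_ofReal h1
          _ = ∑ i : Fin n, ENNReal.ofReal (|t (y i)| + |mt|) :=
              ENNReal.ofReal_sum_of_nonneg fun i _ => by positivity
      calc ∫⁻ y, ENNReal.ofReal (|T y - n * mt|) ∂Pn
          ≤ ∫⁻ y, ∑ i : Fin n, ENNReal.ofReal (|t (y i)| + |mt|) ∂Pn :=
            lintegral_mono hpt
        _ = ∑ i : Fin n, ∫⁻ y, ENNReal.ofReal (|t (y i)| + |mt|) ∂Pn :=
            lintegral_finset_sum _ fun i _ =>
              ((htmeas.abs.comp (measurable_pi_apply i)).add_const _).ennreal_ofReal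
        _ = ∑ _i : Fin n, ∫⁻ x, ENNReal.ofReal (|t x| + |mt|) ∂P :=
            Finset.sum_congr rfl fun i _ =>
              lintegral_eval_aux P i ((htmeas.abs.add_const _).ennreal_ofReal)
        _ = (n : ℝ≥0∞) * ∫⁻ x, ENNReal.ofReal (|t x| + |mt|) ∂P := by
            rw [Finset.sum_const, Finset.card_univ, Fintype.card_fin, nsmul_eq_mul]
        _ ≤ ENNReal.ofReal ((n : ℝ) * (2 * β)) := by
            have hint2 : Integrable (fun x => |t x| + |mt|) P :=
              htint.abs.add (integrable_const _)
            have h1 := ofReal_integral_eq_lintegral_ofReal hint2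
              (Filter.Eventually.of_forall fun x => by positivity)
            have : ∫⁻ x, ENNReal.ofReal (|t x| + |mt|) ∂P
                = ENNReal.ofReal (β + |mt|) := by
              rw [← h1]
              congr 1
              rw [integral_add htint.abs (integrable_const _)]
              simp [hβdef]
            rw [this, ENNReal.ofReal_mul (le_of_lt hnpos), ← ENNReal.ofReal_natCast n]
            exact mul_le_mul_right
              (ENNReal.ofReal_le_ofReal (by linarith [hmtβ])) _
    have hchain : ENNReal.ofReal ((n : ℝ) * ε / 2) * Pn E2
        ≤ ENNReal.ofReal ((n : ℝ) * (2 * β)) := by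
      calc ENNReal.ofReal ((n : ℝ) * ε / 2) * Pn E2
          ≤ ENNReal.ofReal ((n : ℝ) * ε / 2) *
            Pn {y | ENNReal.ofReal ((n : ℝ) * ε / 2) ≤ ENNReal.ofReal (|T y - n * mt|)} :=
            mul_le_mul_right (measure_mono hmono) _
        _ ≤ ∫⁻ y, ENNReal.ofReal (|T y - n * mt|) ∂Pn := hmarkov
        _ ≤ ENNReal.ofReal ((n : ℝ) * (2 * β)) := hlin
    have hchain' : Pn E2 * ENNReal.ofReal ((n : ℝ) * ε / 2)
        ≤ ENNReal.ofReal ((n : ℝ) * (2 * β)) := by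
      rw [mul_comm]; exact hchain
    have hdiv := (ENNReal.le_div_iff_mul_le
      (Or.inl (ENNReal.ofReal_pos.mpr hb0).ne')
      (Or.inl ENNReal.ofReal_ne_top)).mpr hchain'
    calc Pn E2 ≤ ENNReal.ofReal ((n : ℝ) * (2 * β)) / ENNReal.ofReal ((n : ℝ) * ε / 2) := hdiv
      _ = ENNReal.ofReal ((n : ℝ) * (2 * β) / ((n : ℝ) * ε / 2)) :=
          (ENNReal.ofReal_div_of_pos hb0).symm
      _ = ENNReal.ofReal (4 * β / ε) := by
          congr 1
          field_simp
          ring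
  -- combine
  have hb1 : 4 * V / ((n : ℝ) * ε ^ 2) ≤ r / 2 := by
    have hNn : 8 * V / (r * ε ^ 2) ≤ (n : ℝ) :=
      le_trans hNbd (Nat.cast_le.mpr hn)
    rw [div_le_iff₀ (by positivity)] at hNn ⊢
    nlinarith [sq_nonneg ε, hr0, hε]
  have hb2 : 4 * β / ε ≤ r / 2 := by
    rw [div_le_iff₀ hε]
    nlinarith
  calc Pn {y | (n : ℝ) * ε ≤ |(∑ i, g (y i)) - n * m|}
      ≤ Pn (E1 ∪ E2) := measure_mono hsub
    _ ≤ Pn E1 + Pn E2 := measure_union_le _ _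
    _ ≤ ENNReal.ofReal (4 * V / (n * ε ^ 2)) + ENNReal.ofReal (4 * β / ε) :=
        add_le_add hE1bd hE2bd
    _ ≤ ENNReal.ofReal (r / 2) + ENNReal.ofReal (r / 2) :=
        add_le_add (ENNReal.ofReal_le_ofReal hb1) (ENNReal.ofReal_le_ofReal hb2)
    _ = ENNReal.ofReal r := by
        rw [← ENNReal.ofReal_add (by linarith) (by linarith)]
        norm_num
    _ ≤ κ := hrκ

end Aux

/-- **Chapman–Robbins type lower bound under a partial consistency condition**
(Proposition 6, second part).  Under Assumptions A7 and A9, if the estimator `θ̃ⁿ`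
satisfies `limsup ℙ_{θ₁}(θ̃ⁿ ≠ θ₁) < 1` for every `θ₁ ≠ θ₀` (data i.i.d. with law
`ℙ_{θ₁}`), then
`liminf (1/n) ln ℙ_{θ₀}(θ̃ⁿ ≠ θ₀) ≥ sup_{θ₁ ≠ θ₀} E_{θ₁} ln(f(Y;θ₀)/f(Y;θ₁))`. -/
theorem chapman_robbins_lower_bound_partially_consistent
    {𝔜 Θ : Type*} [MeasurableSpace 𝔜]
    [Fintype Θ] [Nonempty Θ] [MeasurableSpace Θ] [MeasurableSingletonClass Θ]
    -- A7: dominated model with everywhere positive measurable densities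
    (μ : Measure 𝔜) [SigmaFinite μ]
    (f : Θ → 𝔜 → ℝ)
    (hf_meas : ∀ θ, Measurable (f θ))
    (hf_pos : ∀ θ y, 0 < f θ y)
    (hf_prob : ∀ θ, IsProbabilityMeasure (densModel μ f θ))
    -- A9: the true value θ₀ is the unique maximizer of θ ↦ E_{θ₀} ln f(Y; θ)
    (θ₀ : Θ)
    (hA9 : ∀ θ, θ ≠ θ₀ →
      ∫ y, Real.log (f θ y) ∂(densModel μ f θ₀) <
        ∫ y, Real.log (f θ₀ y) ∂(densModel μ f θ₀))
    -- the estimator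
    (est : (n : ℕ) → (Fin n → 𝔜) → Θ)
    (hest_meas : ∀ n, Measurable (est n))
    -- partial consistency: limsup_n ℙ_{θ₁}(θ̃ⁿ ≠ θ₁) < 1 for every θ₁ ≠ θ₀
    (hpartial : ∀ θ₁ : Θ, θ₁ ≠ θ₀ →
      Filter.limsup
        (fun n : ℕ => (Measure.pi fun _ : Fin n => densModel μ f θ₁)
          {y | est n y ≠ θ₁}) atTop < 1) :
    Filter.liminf
      (fun n : ℕ => (((n : ℝ)⁻¹ : ℝ) : EReal) *
        ENNReal.log ((Measure.pi fun _ : Fin n => densModel μ f θ₀)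
          {y | est n y ≠ θ₀}))
      atTop
    ≥ ⨆ (θ₁ : Θ) (_ : θ₁ ≠ θ₀),
        extExp (densModel μ f θ₁) (fun y => Real.log (f θ₀ y / f θ₁ y)) := by
  rw [ge_iff_le]
  refine iSup_le fun θ₁ => iSup_le fun hθ₁ => ?_
  haveI hP1prob : IsProbabilityMeasure (densModel μ f θ₁) := hf_prob θ₁
  haveI hP0prob : IsProbabilityMeasure (densModel μ f θ₀) := hf_prob θ₀
  set P1 : Measure 𝔜 := densModel μ f θ₁ with hP1
  set g : 𝔜 → ℝ := fun y => Real.log (f θ₀ y / f θ₁ y) with hgdef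
  have hgmeas : Measurable g := Real.measurable_log.comp ((hf_meas θ₀).div (hf_meas θ₁))
  set a : ℝ≥0∞ := ∫⁻ y, ENNReal.ofReal (g y) ∂P1 with hadef
  set b : ℝ≥0∞ := ∫⁻ y, ENNReal.ofReal (-g y) ∂P1 with hbdef
  have hext0 : extExp P1 g = ((a : EReal)) - ((b : EReal)) := rfl
  -- a ≤ 1
  have ha1 : a ≤ 1 := by
    have hP1d : P1 = μ.withDensity (fun y => ENNReal.ofReal (f θ₁ y)) := rfl
    have hP0univ : (1 : ℝ≥0∞) = ∫⁻ y, ENNReal.ofReal (f θ₀ y) ∂μ := by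
      have h := measure_univ (μ := densModel μ f θ₀)
      rw [densModel, withDensity_apply _ MeasurableSet.univ, setLIntegral_univ] at h
      exact h.symm
    calc a ≤ ∫⁻ y, ENNReal.ofReal (f θ₀ y / f θ₁ y) ∂P1 := by
          refine lintegral_mono fun y => ENNReal.ofReal_le_ofReal ?_
          have hd : 0 < f θ₀ y / f θ₁ y := div_pos (hf_pos θ₀ y) (hf_pos θ₁ y)
          have := Real.log_le_sub_one_of_pos hd
          simp only [hgdef]
          linarith
      _ = ∫⁻ y, ((fun y => ENNReal.ofReal (f θ₁ y)) *
            (fun y => ENNReal.ofReal (f θ₀ y / f θ₁ y))) y ∂μ := by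
          rw [hP1d, lintegral_withDensity_eq_lintegral_mul μ
            ((hf_meas θ₁).ennreal_ofReal)
            (show Measurable fun y => ENNReal.ofReal (f θ₀ y / f θ₁ y) from
              ((hf_meas θ₀).div (hf_meas θ₁)).ennreal_ofReal)]
      _ = ∫⁻ y, ENNReal.ofReal (f θ₀ y) ∂μ := by
          refine lintegral_congr fun y => ?_
          simp only [Pi.mul_apply]
          rw [← ENNReal.ofReal_mul (hf_pos θ₁ y).le]
          congr 1
          rw [mul_comm, div_mul_cancel₀ _ (hf_pos θ₁ y).ne']
      _ = 1 := hP0univ.symm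
  have hatop : a ≠ ⊤ := ne_top_of_le_ne_top ENNReal.one_ne_top ha1
  rcases eq_or_ne b ⊤ with hb | hb
  · rw [hext0, hb, EReal.coe_ennreal_top, EReal.sub_top]
    exact bot_le
  · -- integrable case
    have hgint : Integrable g P1 := by
      refine ⟨hgmeas.aestronglyMeasurable, ?_⟩
      rw [hasFiniteIntegral_iff_norm]
      have hpt : ∀ y, ENNReal.ofReal ‖g y‖ = ENNReal.ofReal (g y) + ENNReal.ofReal (-g y) := by
        intro y
        rcases le_total 0 (g y) with h | h
        · have h1 : -g y ≤ 0 := by linarith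
          rw [ENNReal.ofReal_of_nonpos h1, add_zero,
            Real.norm_eq_abs, abs_of_nonneg h]
        · rw [ENNReal.ofReal_of_nonpos h, zero_add,
            Real.norm_eq_abs, abs_of_nonpos h]
      rw [lintegral_congr hpt, lintegral_add_left hgmeas.ennreal_ofReal]
      exact ENNReal.add_lt_top.mpr ⟨lt_of_le_of_lt ha1 ENNReal.one_lt_top, hb.lt_top⟩
    set m : ℝ := ∫ y, g y ∂P1 with hmdef
    have hext : extExp P1 g = ((m : ℝ) : EReal) := by
      rw [hext0, hmdef, integral_eq_lintegral_pos_part_sub_lintegral_neg_part hgint,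
        EReal.coe_sub]
      congr 1
      · conv_lhs => rw [← ENNReal.ofReal_toReal hatop]
        rw [EReal.coe_ennreal_ofReal, max_eq_left ENNReal.toReal_nonneg]
      · conv_lhs => rw [← ENNReal.ofReal_toReal hb]
        rw [EReal.coe_ennreal_ofReal, max_eq_left ENNReal.toReal_nonneg]
    rw [hext]
    set L : ℕ → EReal := fun n : ℕ => (((n : ℝ)⁻¹ : ℝ) : EReal) *
        ENNReal.log ((Measure.pi fun _ : Fin n => densModel μ f θ₀)
          {y | est n y ≠ θ₀}) with hLdef
    suffices H : ∀ ε : ℝ, 0 < ε → ((m - ε : ℝ) : EReal) ≤ liminf L atTop by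
      by_contra hlt
      push_neg at hlt
      obtain ⟨d, hd1, hd2⟩ := EReal.exists_between_coe_real hlt
      have hdm : d < m := EReal.coe_lt_coe_iff.mp hd2
      have := H (m - d) (by linarith)
      rw [show m - (m - d) = d by ring] at this
      exact absurd this (not_le.mpr hd1)
    intro ε hε
    -- partial consistency gives a uniform positive probability of correct estimation
    obtain ⟨u, hu1, hu2⟩ := exists_between (hpartial θ₁ hθ₁)
    have hev := eventually_lt_of_limsup_lt hu1
    set η : ℝ≥0∞ := 1 - u with hηdef
    have hη0 : 0 < η := tsub_pos_iff_lt.mpr hu2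
    have hηtop : η ≠ ⊤ := ne_top_of_le_ne_top ENNReal.one_ne_top tsub_le_self
    have hη2top : η / 2 ≠ ⊤ := ne_top_of_le_ne_top hηtop ENNReal.half_le_self
    have hη20 : η / 2 ≠ 0 := by
      simp only [ne_eq, ENNReal.div_eq_zero_iff, not_or]
      exact ⟨hη0.ne', ENNReal.ofNat_ne_top⟩
    set δ : ℝ := (η / 2).toReal with hδdef
    have hδ0 : 0 < δ := ENNReal.toReal_pos hη20 hη2top
    have hδeq : ENNReal.ofReal δ = η / 2 := ENNReal.ofReal_toReal hη2top
    -- weak law of large numbers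
    have hwlln := wlln_aux P1 hgmeas hgint hε
    rw [← hmdef] at hwlln
    have hC := (ENNReal.tendsto_nhds_zero.mp hwlln) (η / 2) (zero_lt_iff.mpr hη20)
    have hEv : ∀ᶠ n : ℕ in atTop,
        (((((n : ℝ)⁻¹ * ((n : ℝ) * (m - ε) + Real.log δ)) : ℝ)) : EReal) ≤ L n := by
      filter_upwards [hev, hC, eventually_ge_atTop 1] with n hn1 hn2 hn3
      have hnpos : (0 : ℝ) < n := by exact_mod_cast hn3
      haveI : IsProbabilityMeasure (Measure.pi fun _ : Fin n => P1) := by infer_instance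
      set S : (Fin n → 𝔜) → ℝ := fun y => ∑ i, g (y i) with hSdef
      have hSmeas : Measurable S :=
        Finset.measurable_sum _ fun i _ => hgmeas.comp (measurable_pi_apply i)
      set Pn1 := (Measure.pi fun _ : Fin n => P1) with hPn1def
      set B : Set (Fin n → 𝔜) := est n ⁻¹' {θ₁} with hBdef
      have hB : MeasurableSet B := (hest_meas n) (measurableSet_singleton θ₁)
      set C : Set (Fin n → 𝔜) := {y | S y < (n : ℝ) * (m - ε)} with hCdef
      have hCm : MeasurableSet C := measurableSet_lt hSmeas measurable_const
      set A : Set (Fin n → 𝔜) := B ∩ Cᶜ with hAdef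
      have hA : MeasurableSet A := hB.inter hCm.compl
      -- B has probability ≥ η
      have hBcompl : Bᶜ = {y | est n y ≠ θ₁} := by
        ext y; simp [hBdef]
      have hBlb : η ≤ Pn1 B := by
        have h1 : Pn1 B = 1 - Pn1 Bᶜ := by
          have h := prob_compl_eq_one_sub (μ := Pn1) hB.compl
          rwa [compl_compl] at h
        rw [h1, hηdef]
        refine tsub_le_tsub_left ?_ 1
        rw [hBcompl]
        exact le_of_lt hn1
      -- C has probability ≤ η/2
      have hCub : Pn1 C ≤ η / 2 := by
        refine le_trans (measure_mono ?_) hn2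
        intro y hy
        simp only [hCdef, Set.mem_setOf_eq] at hy
        simp only [Set.mem_setOf_eq]
        have h1 : (n : ℝ) * ε ≤ (n : ℝ) * m - S y := by nlinarith
        calc (n : ℝ) * ε ≤ (n : ℝ) * m - S y := h1
          _ ≤ |S y - (n : ℝ) * m| := by
              rw [abs_sub_comm]; exact le_abs_self _
      -- A has probability ≥ η/2
      have hAlb : η / 2 ≤ Pn1 A := by
        have hBsub : B ⊆ A ∪ C := by
          intro y hy
          by_cases hc : y ∈ C
          · exact Or.inr hc
          · exact Or.inl ⟨hy, hc⟩
        have h1 : η ≤ Pn1 A + Pn1 C :=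
          le_trans hBlb (le_trans (measure_mono hBsub) (measure_union_le _ _))
        have h2 : η ≤ Pn1 A + η / 2 := le_trans h1 (add_le_add_right hCub _)
        have h3 : η - η / 2 ≤ Pn1 A := tsub_le_iff_right.mpr h2
        rwa [ENNReal.sub_half hηtop] at h3
      -- change of measure
      haveI hsf1 : SigmaFinite (μ.withDensity fun y => ENNReal.ofReal (f θ₁ y)) := by
        haveI : IsProbabilityMeasure (μ.withDensity fun y => ENNReal.ofReal (f θ₁ y)) :=
          hf_prob θ₁
        infer_instance
      haveI hsf0 : SigmaFinite (μ.withDensity fun y => ENNReal.ofReal (f θ₀ y)) := by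
        haveI : IsProbabilityMeasure (μ.withDensity fun y => ENNReal.ofReal (f θ₀ y)) :=
          hf_prob θ₀
        infer_instance
      have hpi1 : Pn1 = (Measure.pi fun _ : Fin n => μ).withDensity
          (fun y => ∏ i, ENNReal.ofReal (f θ₁ (y i))) :=
        pi_withDensity_aux μ ((hf_meas θ₁).ennreal_ofReal) n
      have hpi0 : (Measure.pi fun _ : Fin n => densModel μ f θ₀)
          = (Measure.pi fun _ : Fin n => μ).withDensity
            (fun y => ∏ i, ENNReal.ofReal (f θ₀ (y i))) :=
        pi_withDensity_aux μ ((hf_meas θ₀).ennreal_ofReal) n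
      have hfac : (fun y : Fin n → 𝔜 => ∏ i, ENNReal.ofReal (f θ₀ (y i)))
          = (fun y : Fin n → 𝔜 => ∏ i, ENNReal.ofReal (f θ₁ (y i)))
            * (fun y => ENNReal.ofReal (Real.exp (S y))) := by
        funext y
        simp only [Pi.mul_apply, hSdef]
        rw [Real.exp_sum, ENNReal.ofReal_prod_of_nonneg (fun i _ => (Real.exp_pos _).le),
          ← Finset.prod_mul_distrib]
        refine Finset.prod_congr rfl fun i _ => ?_
        rw [← ENNReal.ofReal_mul (hf_pos θ₁ (y i)).le]
        congr 1
        simp only [hgdef]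
        rw [Real.exp_log (div_pos (hf_pos θ₀ _) (hf_pos θ₁ _)),
          mul_comm, div_mul_cancel₀ _ (hf_pos θ₁ (y i)).ne']
      have hprodmeas : Measurable fun y : Fin n → 𝔜 => ∏ i, ENNReal.ofReal (f θ₁ (y i)) :=
        Finset.measurable_prod _ fun i _ =>
          ((hf_meas θ₁).ennreal_ofReal).comp (measurable_pi_apply i)
      have hexpmeas : Measurable fun y : Fin n → 𝔜 => ENNReal.ofReal (Real.exp (S y)) :=
        (Real.measurable_exp.comp hSmeas).ennreal_ofReal
      have hcm : (Measure.pi fun _ : Fin n => densModel μ f θ₀)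
          = Pn1.withDensity (fun y => ENNReal.ofReal (Real.exp (S y))) := by
        rw [hpi0, hfac, withDensity_mul _ hprodmeas hexpmeas, ← hpi1]
      -- key lower bound
      have key : ENNReal.ofReal (Real.exp ((n : ℝ) * (m - ε))) * (η / 2)
          ≤ (Measure.pi fun _ : Fin n => densModel μ f θ₀) {y | est n y ≠ θ₀} := by
        have hAsub : A ⊆ {y | est n y ≠ θ₀} := by
          intro y hy
          have h1 : est n y = θ₁ := hy.1
          simp only [Set.mem_setOf_eq, h1]
          exact hθ₁
        calc ENNReal.ofReal (Real.exp ((n : ℝ) * (m - ε))) * (η / 2)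
            ≤ ENNReal.ofReal (Real.exp ((n : ℝ) * (m - ε))) * Pn1 A :=
              mul_le_mul_right hAlb _
          _ = ∫⁻ _ in A, ENNReal.ofReal (Real.exp ((n : ℝ) * (m - ε))) ∂Pn1 := by
              rw [setLIntegral_const]
          _ ≤ ∫⁻ y in A, ENNReal.ofReal (Real.exp (S y)) ∂Pn1 := by
              refine setLIntegral_mono hexpmeas fun y hy => ?_
              refine ENNReal.ofReal_le_ofReal (Real.exp_le_exp.mpr ?_)
              have h2 : y ∉ C := hy.2
              simp only [hCdef, Set.mem_setOf_eq, not_lt] at h2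
              exact h2
          _ = (Measure.pi fun _ : Fin n => densModel μ f θ₀) A := by
              rw [hcm, withDensity_apply _ hA]
          _ ≤ (Measure.pi fun _ : Fin n => densModel μ f θ₀) {y | est n y ≠ θ₀} :=
              measure_mono hAsub
      -- take logarithms
      have hlog : (((n : ℝ) * (m - ε) + Real.log δ : ℝ) : EReal)
          ≤ ENNReal.log ((Measure.pi fun _ : Fin n => densModel μ f θ₀)
              {y | est n y ≠ θ₀}) := by
        have h1 : ENNReal.ofReal (Real.exp ((n : ℝ) * (m - ε))) * (η / 2)
            = ENNReal.ofReal (Real.exp ((n : ℝ) * (m - ε)) * δ) := by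
          rw [← hδeq, ← ENNReal.ofReal_mul (Real.exp_pos _).le]
        have h2 := ENNReal.log_monotone key
        rw [h1, ENNReal.log_ofReal_of_pos (mul_pos (Real.exp_pos _) hδ0)] at h2
        rw [Real.log_mul (Real.exp_ne_zero _) hδ0.ne', Real.log_exp] at h2
        exact h2
      -- multiply by 1/n
      have hL : L n = (((n : ℝ)⁻¹ : ℝ) : EReal) *
          ENNReal.log ((Measure.pi fun _ : Fin n => densModel μ f θ₀)
            {y | est n y ≠ θ₀}) := rfl
      rw [hL, EReal.coe_mul]
      exact mul_le_mul_of_nonneg_left hlog (EReal.coe_nonneg.mpr (by positivity))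
    -- conclude via liminf comparison
    have hr : Tendsto (fun n : ℕ => (n : ℝ)⁻¹ * ((n : ℝ) * (m - ε) + Real.log δ))
        atTop (𝓝 (m - ε)) := by
      have h1 : Tendsto (fun n : ℕ => (m - ε) + (n : ℝ)⁻¹ * Real.log δ) atTop
          (𝓝 ((m - ε) + 0 * Real.log δ)) :=
        tendsto_const_nhds.add (tendsto_inv_atTop_nhds_zero_nat.mul_const _)
      simp only [zero_mul, add_zero] at h1
      refine Tendsto.congr' ?_ h1
      filter_upwards [eventually_ge_atTop 1] with n hn
      have hn0 : (0 : ℝ) < n := by exact_mod_cast hn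
      field_simp
    have h2 : Tendsto
        (fun n : ℕ => ((((n : ℝ)⁻¹ * ((n : ℝ) * (m - ε) + Real.log δ)) : ℝ) : EReal))
        atTop (𝓝 (((m - ε : ℝ)) : EReal)) := EReal.tendsto_coe.mpr hr
    rw [← h2.liminf_eq]
    exact liminf_le_liminf hEv
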